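/- Suppose f is μ-strongly convex and L-smooth with minimizer x*, and let ρ = μ/L, E(x,y) = f(x) − f(x*) + (μ/2)‖y − x*‖², and E^α(x,y) = E(x,y) + α⟨∇f(x) − ∇f(x*), y − x*⟩. Then for 0 < α ≤ √ρ we have 0 ≤ E^α(x,y) ≤ 2E(x,y) and (1 − α/√ρ)E(x,y) ≤ E^α(x,y) for all (x,y) ∈ ℝ^{2d}. -/

import Mathlib

set_option maxHeartbeats 1000000


open scoped RealInnerProductSpace

/-- Descent lemma: if the gradient is `L`-Lipschitz, then
`f (x + v) ≤ f x + ⟪∇f x, v⟫ + L/2 ‖v‖²`. -/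
lemma descent_lemma {d : ℕ}
    (f : EuclideanSpace ℝ (Fin d) → ℝ) (f' : EuclideanSpace ℝ (Fin d) → EuclideanSpace ℝ (Fin d))
    (L : ℝ) (hL : 0 < L)
    (hf : ∀ x, HasGradientAt f (f' x) x)
    (hsmooth : ∀ x y, ‖f' x - f' y‖ ≤ L * ‖x - y‖)
    (x v : EuclideanSpace ℝ (Fin d)) :
    f (x + v) ≤ f x + ⟪f' x, v⟫ + L / 2 * ‖v‖ ^ 2 := by
  set φ : ℝ → ℝ := fun t => f (x + t • v) - t * ⟪f' x, v⟫ - L * t ^ 2 / 2 * ‖v‖ ^ 2 with hφ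
  have hderiv : ∀ t : ℝ, HasDerivAt φ
      (⟪f' (x + t • v) - f' x, v⟫ - L * t * ‖v‖ ^ 2) t := by
    intro t
    have hline : HasDerivAt (fun t : ℝ => x + t • v) v t := by
      simpa using ((hasDerivAt_id t).smul_const v).const_add x
    have h1 : HasDerivAt (fun t : ℝ => f (x + t • v)) (⟪f' (x + t • v), v⟫) t := by
      have := (hf (x + t • v)).hasFDerivAt.comp_hasDerivAt t hline
      simp at this
      exact this
    have h2 : HasDerivAt (fun t : ℝ => t * ⟪f' x, v⟫) (⟪f' x, v⟫) t := by
      simpa using (hasDerivAt_id t).mul_const (⟪f' x, v⟫)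
    have h3 : HasDerivAt (fun t : ℝ => L * t ^ 2 / 2 * ‖v‖ ^ 2) (L * t * ‖v‖ ^ 2) t := by
      have : HasDerivAt (fun t : ℝ => t ^ 2) (2 * t) t := by
        simpa using hasDerivAt_pow 2 t
      have h3' := ((this.const_mul L).div_const 2).mul_const (‖v‖ ^ 2)
      rw [show L * t * ‖v‖ ^ 2 = L * (2 * t) / 2 * ‖v‖ ^ 2 by ring]
      exact h3'
    have := (h1.sub h2).sub h3
    rw [inner_sub_left]
    exact this
  have hanti : AntitoneOn φ (Set.Icc 0 1) := by
    apply antitoneOn_of_deriv_nonpos (convex_Icc 0 1)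
    · exact fun t _ => ((hderiv t).differentiableAt).continuousAt.continuousWithinAt
    · exact fun t _ => ((hderiv t).differentiableAt).differentiableWithinAt
    · intro t ht
      rw [interior_Icc] at ht
      rw [(hderiv t).deriv]
      have hb : ⟪f' (x + t • v) - f' x, v⟫ ≤ L * t * ‖v‖ ^ 2 := by
        have h1 : ⟪f' (x + t • v) - f' x, v⟫ ≤ ‖f' (x + t • v) - f' x‖ * ‖v‖ :=
          real_inner_le_norm _ _
        have h2 : ‖f' (x + t • v) - f' x‖ ≤ L * ‖(x + t • v) - x‖ := hsmooth _ _
        have h3 : ‖(x + t • v) - x‖ = t * ‖v‖ := by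
          rw [add_sub_cancel_left, norm_smul, Real.norm_eq_abs, abs_of_pos ht.1]
        rw [h3] at h2
        have h4 := mul_le_mul_of_nonneg_right h2 (norm_nonneg v)
        have h5 : L * (t * ‖v‖) * ‖v‖ = L * t * ‖v‖ ^ 2 := by ring
        rw [h5] at h4
        linarith
      linarith
  have h01 := hanti (Set.mem_Icc.mpr ⟨le_refl 0, zero_le_one⟩)
    (Set.mem_Icc.mpr ⟨zero_le_one, le_refl 1⟩) zero_le_one
  simp only [hφ, zero_smul, one_smul, add_zero, zero_mul, zero_pow, mul_zero, zero_div,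
    sub_zero, one_mul, one_pow, mul_one] at h01
  linarith

theorem modified_lyapunov_bounds {d : ℕ}
    (f : EuclideanSpace ℝ (Fin d) → ℝ) (f' : EuclideanSpace ℝ (Fin d) → EuclideanSpace ℝ (Fin d))
    (μ L : ℝ) (hμ : 0 < μ) (hμL : μ ≤ L)
    (hf : ∀ x, HasGradientAt f (f' x) x)
    (hsc : ∀ x y, f y - f x - ⟪f' x, y - x⟫ ≥ μ / 2 * ‖x - y‖ ^ 2)
    (hsmooth : ∀ x y, ‖f' x - f' y‖ ≤ L * ‖x - y‖)
    (xs : EuclideanSpace ℝ (Fin d)) (hmin : ∀ z, f xs ≤ f z)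
    (ρ : ℝ) (hρ : ρ = μ / L)
    (α : ℝ) (hα : 0 < α) (hαρ : α ≤ Real.sqrt ρ)
    (x y : EuclideanSpace ℝ (Fin d))
    (E Eα : ℝ)
    (hE : E = f x - f xs + μ / 2 * ‖y - xs‖ ^ 2)
    (hEα : Eα = E + α * ⟪f' x - f' xs, y - xs⟫) :
    0 ≤ Eα ∧ Eα ≤ 2 * E ∧ (1 - α / Real.sqrt ρ) * E ≤ Eα := by
  have hL : 0 < L := lt_of_lt_of_le hμ hμL
  -- gradient at the minimizer is zero
  have hgs : f' xs = 0 := by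
    have hloc : IsLocalMin f xs := Filter.Eventually.of_forall hmin
    have h0 := hloc.hasFDerivAt_eq_zero (hf xs).hasFDerivAt
    have := (InnerProductSpace.toDual ℝ (EuclideanSpace ℝ (Fin d))).injective
      (by simpa using h0)
    simpa using this
  set a : ℝ := f x - f xs with ha_def
  set b : ℝ := μ / 2 * ‖y - xs‖ ^ 2 with hb_def
  set g : EuclideanSpace ℝ (Fin d) := f' x with hg_def
  set c : ℝ := ⟪f' x - f' xs, y - xs⟫ with hc_def
  have hcg : c = ⟪g, y - xs⟫ := by rw [hc_def, hgs, sub_zero]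
  -- strong convexity at xs: a ≥ μ/2 ‖x - xs‖²
  have ha_lb : μ / 2 * ‖x - xs‖ ^ 2 ≤ a := by
    have := hsc xs x
    rw [hgs] at this
    simp only [inner_zero_left] at this
    rw [norm_sub_rev] at this
    linarith
  have ha : 0 ≤ a := le_trans (by positivity) ha_lb
  have hb : 0 ≤ b := by positivity
  -- gradient bound: ‖g‖² ≤ 2 L a
  have hg2 : ‖g‖ ^ 2 ≤ 2 * L * a := by
    have hd := descent_lemma f f' L hL hf hsmooth x (-(L⁻¹ • g))
    have hmin' := hmin (x + -(L⁻¹ • g))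
    have hip : ⟪g, -(L⁻¹ • g)⟫ = -(L⁻¹ * ‖g‖ ^ 2) := by
      rw [inner_neg_right, real_inner_smul_right, real_inner_self_eq_norm_sq]
    have hnv : ‖-(L⁻¹ • g)‖ ^ 2 = L⁻¹ ^ 2 * ‖g‖ ^ 2 := by
      rw [norm_neg, norm_smul, mul_pow, Real.norm_eq_abs, sq_abs]
    rw [hip, hnv] at hd
    have hL' : L ≠ 0 := ne_of_gt hL
    have : f xs ≤ f x - L⁻¹ * ‖g‖ ^ 2 + L / 2 * (L⁻¹ ^ 2 * ‖g‖ ^ 2) := le_trans hmin' hd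
    have e : L / 2 * (L⁻¹ ^ 2 * ‖g‖ ^ 2) = L⁻¹ / 2 * ‖g‖ ^ 2 := by
      field_simp
    rw [e] at this
    have h6 : L⁻¹ / 2 * ‖g‖ ^ 2 ≤ a := by rw [ha_def]; linarith
    have h7 : ‖g‖ ^ 2 = 2 * L * (L⁻¹ / 2 * ‖g‖ ^ 2) := by
      field_simp
    rw [h7]
    exact mul_le_mul_of_nonneg_left h6 (by positivity)
  -- Cauchy-Schwarz bound
  have hc2 : c ^ 2 ≤ ‖g‖ ^ 2 * ‖y - xs‖ ^ 2 := by
    have := abs_real_inner_le_norm g (y - xs)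
    rw [hcg]
    nlinarith [abs_nonneg (⟪g, y - xs⟫), sq_abs (⟪g, y - xs⟫), norm_nonneg g,
      norm_nonneg (y - xs)]
  -- key square bound: (α c)² ≤ (k E)² where k = α / √ρ
  have hρ0 : 0 < ρ := by rw [hρ]; positivity
  set s : ℝ := Real.sqrt ρ with hs_def
  have hs0 : 0 < s := Real.sqrt_pos.mpr hρ0
  have hs2 : s ^ 2 = ρ := Real.sq_sqrt hρ0.le
  have hE' : E = a + b := by rw [hE, ha_def, hb_def]
  have hE0 : 0 ≤ E := by rw [hE']; linarith
  set k : ℝ := α / s with hk_def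
  have hk0 : 0 < k := div_pos hα hs0
  have hk1 : k ≤ 1 := by rw [hk_def]; exact div_le_one_of_le₀ hαρ hs0.le
  have hyb : ‖y - xs‖ ^ 2 = 2 * b / μ := by rw [hb_def]; field_simp
  have hα2 : α ^ 2 = k ^ 2 * (μ / L) := by
    rw [hk_def, div_pow, hs2, hρ]
    field_simp
  have hkey : (α * c) ^ 2 ≤ (k * E) ^ 2 := by
    have h1 : c ^ 2 ≤ 2 * L * a * (2 * b / μ) := by
      calc c ^ 2 ≤ ‖g‖ ^ 2 * ‖y - xs‖ ^ 2 := hc2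
        _ = ‖g‖ ^ 2 * (2 * b / μ) := by rw [hyb]
        _ ≤ 2 * L * a * (2 * b / μ) := by
            apply mul_le_mul_of_nonneg_right hg2
            positivity
    have h2 : (α * c) ^ 2 = α ^ 2 * c ^ 2 := by ring
    have h3 : α ^ 2 * c ^ 2 ≤ k ^ 2 * (μ / L) * (2 * L * a * (2 * b / μ)) := by
      rw [hα2]
      apply mul_le_mul_of_nonneg_left h1
      positivity
    have h4 : k ^ 2 * (μ / L) * (2 * L * a * (2 * b / μ)) = 4 * k ^ 2 * (a * b) := by
      field_simp
      ring
    have h5 : 4 * k ^ 2 * (a * b) ≤ k ^ 2 * (a + b) ^ 2 := by nlinarith [sq_nonneg (a - b)]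
    calc (α * c) ^ 2 = α ^ 2 * c ^ 2 := by ring
      _ ≤ k ^ 2 * (μ / L) * (2 * L * a * (2 * b / μ)) := h3
      _ = 4 * k ^ 2 * (a * b) := h4
      _ ≤ k ^ 2 * (a + b) ^ 2 := h5
      _ = (k * (a + b)) ^ 2 := by ring
      _ = (k * E) ^ 2 := by rw [hE']
  have habs : -(k * E) ≤ α * c ∧ α * c ≤ k * E := by
    constructor <;> nlinarith [sq_nonneg (α * c + k * E), sq_nonneg (α * c - k * E),
      mul_nonneg hk0.le hE0]
  have hkE : k * E ≤ E := by nlinarith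
  refine ⟨?_, ?_, ?_⟩
  · rw [hEα]; linarith [habs.1]
  · rw [hEα]; linarith [habs.2]
  · rw [hEα]
    have heq : (1 - k) * E = E - k * E := by ring
    show (1 - k) * E ≤ E + α * c
    rw [heq]
    linarith [habs.1]
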